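/- Let m ≥ 1 be fixed and n ≥ m. Let H be the random n×m Toeplitz matrix built from i.i.d. Rademacher inputs. Fix z ∈ ℝ^m with ‖z‖₂ = 1, let ε > 0, and let K ⊆ {1,…,n} be an arbitrary fixed subset. Set S = n·E|Σ_{i=1}^m z_i ε_i| with ε₁,…,ε_m i.i.d. Rademacher. Then with probability at least 1 − 2e^{−ε² n² / (2(n+m−1)m)}, one has (|K|/n)·S − εn ≤ ‖(Hz)_K‖₁ ≤ (|K|/n)·S + εn. -/

import Mathlib

open MeasureTheory ProbabilityTheory Finset Filter

noncomputable section

/-- The `n × m` Toeplitz matrix built from the input sequence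
`h = (h_{-m+2}, …, h_n)`, reindexed as `h : Fin (n+m-1) → ℝ`;
the `(i,j)` entry (0-based) is the input with index `i + j`, which corresponds to
`H_{i,j} = h_{i-m+j}` in 1-based indexing. -/
def toeplitz (n m : ℕ) (h : Fin (n + m - 1) → ℝ) : Matrix (Fin n) (Fin m) ℝ :=
  fun i j => h ⟨i.1 + j.1, by have := i.2; have := j.2; omega⟩

/-- The ℓ¹ norm of a vector in `ℝ^k`. -/
def l1 {k : ℕ} (v : Fin k → ℝ) : ℝ := ∑ i, |v i|

/-- The Euclidean (ℓ²) norm of a vector in `ℝ^k`. -/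
def l2 {k : ℕ} (v : Fin k → ℝ) : ℝ := Real.sqrt (∑ i, (v i) ^ 2)

/-- The Rademacher measure on ℝ: values `+1` and `-1` with probability `1/2` each. -/
def radMeasure : Measure ℝ :=
  (2 : ENNReal)⁻¹ • Measure.dirac 1 + (2 : ENNReal)⁻¹ • Measure.dirac (-1)

/-- Product of `d` i.i.d. Rademacher measures on `ℝ^d`. -/
def radPi (d : ℕ) : Measure (Fin d → ℝ) := Measure.pi fun _ => radMeasure

open Classical in
/-- Number of nonzero entries of a vector. -/
def sparsity {k : ℕ} (v : Fin k → ℝ) : ℕ := (Finset.univ.filter fun i => v i ≠ 0).card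

namespace Stmt9Aux




/-- ±1 from a boolean. -/
def eb (b : Bool) : ℝ := if b then 1 else -1

/-- Embedding of boolean vectors as ±1 real vectors. -/
def emb {d : ℕ} (s : Fin d → Bool) : Fin d → ℝ := fun i => eb (s i)

instance : IsProbabilityMeasure radMeasure := by
  constructor
  simp [radMeasure, ENNReal.inv_two_add_inv_two]

instance (d : ℕ) : IsProbabilityMeasure (radPi d) :=
  MeasureTheory.Measure.pi.instIsProbabilityMeasure _

lemma radPi_eq (d : ℕ) :
    radPi d = ((2 : ENNReal) ^ d)⁻¹ • ∑ s : Fin d → Bool, Measure.dirac (emb s) := by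
  classical
  refine (Measure.pi_eq fun t ht => ?_)
  have hds : ∀ s : Fin d → Bool, Measure.dirac (emb s) (Set.pi Set.univ t) =
      ∏ i, (if eb (s i) ∈ t i then (1 : ENNReal) else 0) := by
    intro s
    rw [Measure.dirac_apply' _ (MeasurableSet.univ_pi ht)]
    by_cases h : emb s ∈ Set.pi Set.univ t
    · rw [Set.indicator_of_mem h]
      rw [Set.mem_univ_pi] at h
      simp only [Pi.one_apply]
      rw [Finset.prod_eq_one]
      intro i _
      have hi := h i
      simp only [emb] at hi
      simp [hi]
    · rw [Set.indicator_of_notMem h]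
      rw [Set.mem_univ_pi] at h
      push_neg at h
      obtain ⟨i, hi⟩ := h
      exact (Finset.prod_eq_zero (Finset.mem_univ i) (by simp [emb] at hi; simp [hi])).symm
  rw [Measure.smul_apply, Measure.finset_sum_apply, smul_eq_mul]
  simp only [hds]
  have hswap : ∑ s : Fin d → Bool, ∏ i, (if eb (s i) ∈ t i then (1 : ENNReal) else 0)
      = ∏ i, ∑ b : Bool, (if eb b ∈ t i then (1 : ENNReal) else 0) := by
    rw [← Finset.sum_prod_piFinset (Finset.univ : Finset Bool)
      (fun i b => if eb b ∈ t i then (1 : ENNReal) else 0), Fintype.piFinset_univ]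
  rw [hswap]
  have hrm : ∀ i, radMeasure (t i)
      = 2⁻¹ * ∑ b : Bool, (if eb b ∈ t i then (1 : ENNReal) else 0) := by
    intro i
    rw [radMeasure]
    simp only [Measure.add_apply, Measure.smul_apply, smul_eq_mul,
      Measure.dirac_apply' _ (ht i), Fintype.sum_bool, eb]
    simp only [Set.indicator_apply, Pi.one_apply]
    norm_num
    rw [mul_add]
    congr 1 <;> split <;> simp
  rw [Finset.prod_congr rfl fun i _ => hrm i, Finset.prod_mul_distrib,
    Finset.prod_const, Finset.card_univ, Fintype.card_fin]
  rw [← ENNReal.inv_pow]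


lemma integrable_dirac {d : ℕ} {f : (Fin d → ℝ) → ℝ} (hf : Measurable f) (x : Fin d → ℝ) :
    Integrable f (Measure.dirac x) := by
  refine ⟨hf.aestronglyMeasurable, ?_⟩
  rw [HasFiniteIntegral, lintegral_dirac' _ hf.enorm]
  exact ENNReal.coe_lt_top

lemma integral_radPi {d : ℕ} {f : (Fin d → ℝ) → ℝ} (hf : Measurable f) :
    ∫ a, f a ∂ radPi d = (∑ s : Fin d → Bool, f (emb s)) / 2 ^ d := by
  rw [radPi_eq, integral_smul_measure,
    integral_finset_sum_measure (fun s _ => integrable_dirac hf (emb s))]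
  simp only [integral_dirac' _ _ hf.stronglyMeasurable]
  rw [ENNReal.toReal_inv, ENNReal.toReal_pow, ENNReal.toReal_ofNat]
  rw [smul_eq_mul, inv_mul_eq_div]

lemma radPi_ge_count {d : ℕ} (E : Set (Fin d → ℝ)) [DecidablePred (fun s : Fin d → Bool => emb s ∈ E)] :
    ((Finset.univ.filter fun s : Fin d → Bool => emb s ∈ E).card : ENNReal) * ((2:ENNReal)^d)⁻¹
      ≤ radPi d E := by
  rw [radPi_eq, Measure.smul_apply, Measure.finset_sum_apply, smul_eq_mul]
  have h1 : ((Finset.univ.filter fun s : Fin d → Bool => emb s ∈ E).card : ENNReal)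
      ≤ ∑ s : Fin d → Bool, Measure.dirac (emb s) E := by
    rw [← Finset.sum_boole]
    refine Finset.sum_le_sum fun s _ => ?_
    by_cases h : emb s ∈ E
    · simp [h, Measure.dirac_apply_of_mem h]
    · simp [h]
  calc ((Finset.univ.filter fun s : Fin d → Bool => emb s ∈ E).card : ENNReal) * ((2:ENNReal)^d)⁻¹
      ≤ (∑ s : Fin d → Bool, Measure.dirac (emb s) E) * ((2:ENNReal)^d)⁻¹ := by gcongr
    _ = ((2:ENNReal)^d)⁻¹ * ∑ s : Fin d → Bool, Measure.dirac (emb s) E := mul_comm _ _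





/-- Two-point Hoeffding-type inequality via `cosh x ≤ exp (x²/2)`. -/
lemma two_point (l a b : ℝ) :
    Real.exp (l * a) + Real.exp (l * b)
      ≤ 2 * Real.exp (l * ((a + b) / 2) + l ^ 2 * (a - b) ^ 2 / 8) := by
  have h1 : l * a = l * ((a + b) / 2) + l * (a - b) / 2 := by ring
  have h2 : l * b = l * ((a + b) / 2) - l * (a - b) / 2 := by ring
  rw [h1, h2, Real.exp_add, Real.exp_sub, Real.exp_add]
  have hcosh : Real.exp (l * (a - b) / 2) + (Real.exp (l * (a - b) / 2))⁻¹
      = 2 * Real.cosh (l * (a - b) / 2) := by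
    rw [Real.cosh_eq, ← Real.exp_neg]; ring
  have hc : Real.cosh (l * (a - b) / 2) ≤ Real.exp (l ^ 2 * (a - b) ^ 2 / 8) := by
    refine (Real.cosh_le_exp_half_sq _).trans ?_
    apply Real.exp_le_exp.2
    rw [div_le_div_iff₀ (by norm_num) (by norm_num)]
    ring_nf
    nlinarith [sq_nonneg (l * (a-b))]
  have hepos := Real.exp_pos (l * ((a + b) / 2))
  calc Real.exp (l * ((a+b)/2)) * Real.exp (l*(a-b)/2)
        + Real.exp (l * ((a+b)/2)) / Real.exp (l*(a-b)/2)
      = Real.exp (l * ((a+b)/2)) * (Real.exp (l*(a-b)/2) + (Real.exp (l*(a-b)/2))⁻¹) := by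
        rw [div_eq_mul_inv]; ring
    _ = Real.exp (l * ((a+b)/2)) * (2 * Real.cosh (l * (a - b) / 2)) := by rw [hcosh]
    _ ≤ Real.exp (l * ((a+b)/2)) * (2 * Real.exp (l ^ 2 * (a - b) ^ 2 / 8)) := by
        have h2c : (0:ℝ) ≤ 2 := by norm_num
        gcongr
    _ = 2 * (Real.exp (l * ((a+b)/2)) * Real.exp (l ^ 2 * (a - b) ^ 2 / 8)) := by ring

/-- MGF bound for functions with bounded differences on the Boolean cube. -/
lemma mgf_bound : ∀ (d : ℕ) (f : (Fin d → Bool) → ℝ) (c : Fin d → ℝ),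
    (∀ (k : Fin d) (s s' : Fin d → Bool), (∀ j, j ≠ k → s j = s' j) → |f s - f s'| ≤ c k) →
    ∀ l : ℝ,
    ∑ s : Fin d → Bool, Real.exp (l * f s)
      ≤ 2 ^ d * Real.exp (l * ((∑ s : Fin d → Bool, f s) / 2 ^ d)
          + l ^ 2 * (∑ k : Fin d, c k ^ 2) / 8) := by
  intro d
  induction d with
  | zero =>
    intro f c hc l
    have e1 : ∀ (F : (Fin 0 → Bool) → ℝ), ∑ s : Fin 0 → Bool, F s = F default := by
      intro F
      rw [Finset.sum_eq_single default (fun b _ hb => absurd (Subsingleton.elim b default) hb)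
        (fun h => absurd (Finset.mem_univ _) h)]
    rw [e1, e1]
    simp
  | succ d ih =>
    intro f c hc l
    have split : ∀ F : (Fin (d+1) → Bool) → ℝ,
        ∑ s : Fin (d+1) → Bool, F s
          = ∑ t : Fin d → Bool, F (Fin.cons true t) + ∑ t : Fin d → Bool, F (Fin.cons false t) := by
      intro F
      rw [← Equiv.sum_comp (Fin.consEquiv (fun _ => Bool)) F, Fintype.sum_prod_type,
        Fintype.sum_bool]
      rfl
    -- sections
    set g : Bool → ℝ := fun b => (∑ t : Fin d → Bool, f (Fin.cons b t)) / 2 ^ d with hg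
    have hsec : ∀ b : Bool, ∑ t : Fin d → Bool, Real.exp (l * f (Fin.cons b t))
        ≤ 2 ^ d * Real.exp (l * g b + l ^ 2 * (∑ k : Fin d, c k.succ ^ 2) / 8) := by
      intro b
      refine ih (fun t => f (Fin.cons b t)) (fun k => c k.succ) ?_ l
      intro k t t' hj
      refine hc k.succ _ _ ?_
      intro j hjk
      rcases Fin.eq_zero_or_eq_succ j with rfl | ⟨i, rfl⟩
      · simp
      · simp only [Fin.cons_succ]
        exact hj i (fun h => hjk (by rw [h]))
    have hgd : |g true - g false| ≤ c 0 := by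
      have : g true - g false = (∑ t : Fin d → Bool, (f (Fin.cons true t) - f (Fin.cons false t))) / 2 ^ d := by
        rw [hg]; rw [Finset.sum_sub_distrib]; ring
      rw [this, abs_div, abs_of_pos (by positivity : (0:ℝ) < (2:ℝ)^d), div_le_iff₀ (by positivity)]
      calc |∑ t : Fin d → Bool, (f (Fin.cons true t) - f (Fin.cons false t))|
          ≤ ∑ t : Fin d → Bool, |f (Fin.cons true t) - f (Fin.cons false t)| :=
            Finset.abs_sum_le_sum_abs _ _
        _ ≤ ∑ _t : Fin d → Bool, c 0 := by
            refine Finset.sum_le_sum fun t _ => ?_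
            refine hc 0 _ _ ?_
            intro j hj
            rcases Fin.eq_zero_or_eq_succ j with rfl | ⟨i, rfl⟩
            · exact absurd rfl hj
            · simp
        _ = c 0 * 2 ^ d := by
            rw [Finset.sum_const, Finset.card_univ, Fintype.card_fun, Fintype.card_bool,
              Fintype.card_fin, nsmul_eq_mul]
            push_cast
            ring
    set Vt := ∑ k : Fin d, c k.succ ^ 2 with hVt
    have hM : (∑ s : Fin (d+1) → Bool, f s) / 2 ^ (d+1) = (g true + g false) / 2 := by
      rw [split f]
      simp only [hg]
      field_simp
      ring_nf
      try exact Or.inl trivial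
    have hV : (∑ k : Fin (d+1), c k ^ 2) = c 0 ^ 2 + Vt := Fin.sum_univ_succ _
    have hsq : (g true - g false) ^ 2 ≤ c 0 ^ 2 := by
      rw [← sq_abs (g true - g false)]
      exact pow_le_pow_left₀ (abs_nonneg _) hgd 2
    calc ∑ s : Fin (d+1) → Bool, Real.exp (l * f s)
        = ∑ t : Fin d → Bool, Real.exp (l * f (Fin.cons true t))
          + ∑ t : Fin d → Bool, Real.exp (l * f (Fin.cons false t)) := split _
      _ ≤ 2 ^ d * Real.exp (l * g true + l ^ 2 * Vt / 8)
          + 2 ^ d * Real.exp (l * g false + l ^ 2 * Vt / 8) :=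
            add_le_add (hsec true) (hsec false)
      _ = 2 ^ d * Real.exp (l ^ 2 * Vt / 8)
          * (Real.exp (l * g true) + Real.exp (l * g false)) := by
            rw [Real.exp_add, Real.exp_add]; ring
      _ ≤ 2 ^ d * Real.exp (l ^ 2 * Vt / 8)
          * (2 * Real.exp (l * ((g true + g false) / 2)
              + l ^ 2 * (g true - g false) ^ 2 / 8)) :=
            mul_le_mul_of_nonneg_left (two_point l (g true) (g false)) (by positivity)
      _ ≤ 2 ^ d * Real.exp (l ^ 2 * Vt / 8)
          * (2 * Real.exp (l * ((g true + g false) / 2) + l ^ 2 * c 0 ^ 2 / 8)) := by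
            have h8 : l ^ 2 * (g true - g false) ^ 2 / 8 ≤ l ^ 2 * c 0 ^ 2 / 8 := by
              have := sq_nonneg l
              gcongr
            exact mul_le_mul_of_nonneg_left
              (by
                have := Real.exp_le_exp.2 (add_le_add_right h8 (l * ((g true + g false) / 2)))
                linarith) (by positivity)
      _ = 2 ^ (d+1) * Real.exp (l * ((∑ s : Fin (d+1) → Bool, f s) / 2 ^ (d+1))
          + l ^ 2 * (∑ k : Fin (d+1), c k ^ 2) / 8) := by
            have hexp : Real.exp (l ^ 2 * Vt / 8)
                * Real.exp (l * ((g true + g false) / 2) + l ^ 2 * c 0 ^ 2 / 8)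
                = Real.exp (l * ((g true + g false) / 2) + l ^ 2 * (c 0 ^ 2 + Vt) / 8) := by
              rw [← Real.exp_add]
              congr 1
              ring
            rw [hM, hV, pow_succ (2:ℝ) d, ← hexp]
            ring

open Classical in
/-- One-sided Chernoff bound from the MGF bound. -/
lemma chernoff {d : ℕ} (f : (Fin d → Bool) → ℝ) (c : Fin d → ℝ)
    (hc : ∀ (k : Fin d) (s s' : Fin d → Bool), (∀ j, j ≠ k → s j = s' j) → |f s - f s'| ≤ c k)
    (t : ℝ) (ht : 0 < t) (hV : 0 < ∑ k : Fin d, c k ^ 2) :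
    ((Finset.univ.filter fun s : Fin d → Bool =>
        (∑ s' : Fin d → Bool, f s') / 2 ^ d + t ≤ f s).card : ℝ)
      ≤ 2 ^ d * Real.exp (-2 * t ^ 2 / ∑ k : Fin d, c k ^ 2) := by
  set V := ∑ k : Fin d, c k ^ 2 with hVdef
  set M := (∑ s' : Fin d → Bool, f s') / 2 ^ d with hMdef
  set l := 4 * t / V with hl
  have hlpos : 0 < l := by positivity
  have key : ((Finset.univ.filter fun s : Fin d → Bool => M + t ≤ f s).card : ℝ)
      ≤ ∑ s : Fin d → Bool, Real.exp (l * (f s - M - t)) := by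
    calc ((Finset.univ.filter fun s : Fin d → Bool => M + t ≤ f s).card : ℝ)
        = ∑ _s ∈ Finset.univ.filter fun s : Fin d → Bool => M + t ≤ f s, (1:ℝ) := by
          rw [Finset.sum_const, nsmul_eq_mul, mul_one]
      _ ≤ ∑ s ∈ Finset.univ.filter fun s : Fin d → Bool => M + t ≤ f s,
            Real.exp (l * (f s - M - t)) := by
          refine Finset.sum_le_sum fun s hs => ?_
          rw [Finset.mem_filter] at hs
          refine Real.one_le_exp ?_
          have h2 : 0 ≤ f s - M - t := by linarith [hs.2]
          positivity
      _ ≤ ∑ s : Fin d → Bool, Real.exp (l * (f s - M - t)) :=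
          Finset.sum_le_sum_of_subset_of_nonneg (Finset.filter_subset _ _)
            (fun s _ _ => (Real.exp_pos _).le)
  have expand : ∀ s : Fin d → Bool,
      Real.exp (l * (f s - M - t)) = Real.exp (l * f s) * Real.exp (-(l * (M + t))) := by
    intro s; rw [← Real.exp_add]; ring_nf
  calc ((Finset.univ.filter fun s : Fin d → Bool => M + t ≤ f s).card : ℝ)
      ≤ ∑ s : Fin d → Bool, Real.exp (l * (f s - M - t)) := key
    _ = (∑ s : Fin d → Bool, Real.exp (l * f s)) * Real.exp (-(l * (M + t))) := by
        simp only [expand]; rw [← Finset.sum_mul]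
    _ ≤ (2 ^ d * Real.exp (l * M + l ^ 2 * V / 8)) * Real.exp (-(l * (M + t))) := by
        gcongr
        exact mgf_bound d f c hc l
    _ = 2 ^ d * Real.exp ((l * M + l ^ 2 * V / 8) + -(l * (M + t))) := by
        rw [Real.exp_add (l * M + l ^ 2 * V / 8) (-(l * (M + t)))]; ring
    _ = 2 ^ d * Real.exp (-2 * t ^ 2 / V) := by
        have hV0 : V ≠ 0 := ne_of_gt hV
        have hexp : (l * M + l ^ 2 * V / 8) + -(l * (M + t)) = -2 * t ^ 2 / V := by
          rw [hl]; field_simp; ring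
        rw [hexp]





/-- Summing a function of `m` selected coordinates over the `d`-cube. -/
lemma sum_comp_proj {d m : ℕ} (hmd : m ≤ d) (σ : Fin m → Fin d) (hσ : Function.Injective σ)
    (g : (Fin m → Bool) → ℝ) :
    ∑ s : Fin d → Bool, g (fun j => s (σ j)) = 2 ^ (d - m) * ∑ t : Fin m → Bool, g t := by
  classical
  set p : Fin d → Prop := fun x => x ∈ Set.range σ with hp
  let e : Fin m ≃ {x // p x} := Equiv.ofInjective σ hσ
  have he : ∀ j, (e j : Fin d) = σ j := fun j => rfl
  let E1 : (Fin d → Bool) ≃ ({x // p x} → Bool) × ({x // ¬ p x} → Bool) :=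
    Equiv.piEquivPiSubtypeProd p (fun _ => Bool)
  have step1 : ∑ s : Fin d → Bool, g (fun j => s (σ j))
      = ∑ q : ({x // p x} → Bool) × ({x // ¬ p x} → Bool), g (fun j => q.1 (e j)) := by
    rw [← Equiv.sum_comp E1 (fun q => g (fun j => q.1 (e j)))]
    exact Finset.sum_congr rfl fun s _ => rfl
  rw [step1, Fintype.sum_prod_type]
  have step2 : ∀ u : {x // p x} → Bool,
      ∑ _r : {x // ¬ p x} → Bool, g (fun j => u (e j)) = 2 ^ (d - m) * g (fun j => u (e j)) := by
    intro u
    rw [Finset.sum_const, Finset.card_univ, Fintype.card_fun, Fintype.card_bool,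
      Fintype.card_subtype_compl, nsmul_eq_mul]
    have hcard : Fintype.card {x // p x} = m := by
      rw [Fintype.card_congr e.symm, Fintype.card_fin]
    rw [hcard, Fintype.card_fin]
    push_cast
    ring
  simp only [step2]
  rw [← Finset.mul_sum]
  congr 1
  rw [← Equiv.sum_comp (Equiv.arrowCongr e (Equiv.refl Bool))
    (fun u : {x // p x} → Bool => g (fun j => u (e j)))]
  refine Finset.sum_congr rfl fun t _ => ?_
  congr 1
  funext j
  simp [Equiv.arrowCongr]



end Stmt9Aux

/-- McDiarmid-type concentration of `‖(Hz)_K‖₁` for the Rademacher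
Toeplitz matrix, a fixed unit vector `z` and a fixed subset `K`, around `(|K|/n)·S`
with `S = n·E|∑ zᵢεᵢ|`: the two-sided bound holds with probability at least
`1 - 2e^{-ε²n²/(2(n+m-1)m)}`. -/
theorem stmt9 (m n : ℕ) (hm : 1 ≤ m) (hmn : m ≤ n)
    (z : Fin m → ℝ) (hz : l2 z = 1) (ε : ℝ) (hε : 0 < ε) (K : Finset (Fin n)) :
    ENNReal.ofReal
        (1 - 2 * Real.exp (-(ε ^ 2 * (n : ℝ) ^ 2) / (2 * ((n : ℝ) + m - 1) * m))) ≤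
      radPi (n + m - 1)
        {h | ((K.card : ℝ) / n) * ((n : ℝ) * (∫ a, |∑ i, z i * a i| ∂ radPi m))
              - ε * n ≤ ∑ i ∈ K, |(toeplitz n m h).mulVec z i| ∧
            ∑ i ∈ K, |(toeplitz n m h).mulVec z i| ≤
              ((K.card : ℝ) / n) * ((n : ℝ) * (∫ a, |∑ i, z i * a i| ∂ radPi m))
                + ε * n} := by
  
  classical
  have hn : 1 ≤ n := hm.trans hmn
  set d := n + m - 1 with hd
  have hdm : m ≤ d := by omega
  have hd1 : 1 ≤ d := by omega
  have hidx : ∀ (i : Fin n) (j : Fin m), i.1 + j.1 < d := fun i j => by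
    have := i.2; have := j.2; omega
  set σ : Fin n → Fin m → Fin d := fun i j => ⟨i.1 + j.1, hidx i j⟩ with hσ
  set f : (Fin d → Bool) → ℝ :=
    fun s => ∑ i ∈ K, |∑ j : Fin m, z j * Stmt9Aux.eb (s (σ i j))| with hf
  set gz : (Fin m → Bool) → ℝ := fun t => |∑ j : Fin m, z j * Stmt9Aux.eb (t j)| with hgz
  set t : ℝ := ε * n with htdef
  have ht : 0 < t := by
    have : (0:ℝ) < n := by exact_mod_cast hn
    positivity
  set M : ℝ := (∑ s : Fin d → Bool, f s) / 2 ^ d with hM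
  -- the integral as a finite average
  have hzm : Measurable fun a : Fin m → ℝ => |∑ i, z i * a i| := by
    apply Measurable.abs
    exact Finset.measurable_sum _ fun i _ => measurable_const.mul (measurable_pi_apply i)
  have hIm : (∫ a, |∑ i, z i * a i| ∂ radPi m) = (∑ u : Fin m → Bool, gz u) / 2 ^ m := by
    rw [Stmt9Aux.integral_radPi hzm]
    rfl
  -- mean of f
  have hmean : M = (K.card : ℝ) * ((∑ u : Fin m → Bool, gz u) / 2 ^ m) := by
    have hrow : ∀ i : Fin n, ∑ s : Fin d → Bool, gz (fun j => s (σ i j))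
        = 2 ^ (d - m) * ∑ u : Fin m → Bool, gz u := fun i =>
      Stmt9Aux.sum_comp_proj hdm (σ i)
        (fun j j' hjj => by
          have h1 : i.1 + j.1 = i.1 + j'.1 := congrArg Fin.val hjj
          exact Fin.val_injective (by omega)) gz
    have hswap : ∑ s : Fin d → Bool, f s
        = ∑ i ∈ K, ∑ s : Fin d → Bool, gz (fun j => s (σ i j)) := by
      rw [Finset.sum_comm]
    rw [hM, hswap, Finset.sum_congr rfl fun i _ => hrow i, Finset.sum_const, nsmul_eq_mul]
    have h2 : (2:ℝ) ^ d = 2 ^ (d - m) * 2 ^ m := by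
      rw [← pow_add]; congr 1; omega
    rw [h2]
    have h2m : ((2:ℝ) ^ m) ≠ 0 := by positivity
    have h2dm : ((2:ℝ) ^ (d - m)) ≠ 0 := by positivity
    field_simp
  -- ℓ¹ bound on z
  have hz2 : ∑ j : Fin m, z j ^ 2 = 1 := by
    have h := hz
    rw [l2] at h
    have h0 : 0 ≤ ∑ i, z i ^ 2 := Finset.sum_nonneg fun i _ => sq_nonneg _
    nlinarith [Real.sq_sqrt h0]
  have habs : ∑ j : Fin m, |z j| ≤ Real.sqrt m := by
    have h1 : (∑ j : Fin m, |z j|) ^ 2 ≤ (m : ℝ) * ∑ j, z j ^ 2 := by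
      have h2 := sq_sum_le_card_mul_sum_sq (s := (Finset.univ : Finset (Fin m)))
        (f := fun j : Fin m => |z j|)
      simpa [Finset.card_univ, sq_abs] using h2
    calc ∑ j : Fin m, |z j| = Real.sqrt ((∑ j : Fin m, |z j|) ^ 2) :=
          (Real.sqrt_sq (by positivity)).symm
      _ ≤ Real.sqrt m := Real.sqrt_le_sqrt (by rw [hz2, mul_one] at h1; exact h1)
  -- bounded differences
  have hebd : ∀ a b : Bool, |Stmt9Aux.eb a - Stmt9Aux.eb b| ≤ 2 := by
    intro a b; cases a <;> cases b <;> norm_num [Stmt9Aux.eb]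
  have hbd : ∀ (k : Fin d) (s s' : Fin d → Bool), (∀ j, j ≠ k → s j = s' j)
      → |f s - f s'| ≤ 2 * Real.sqrt m := by
    intro k s s' hss
    have hrowdiff : ∀ i : Fin n,
        |(∑ j : Fin m, z j * Stmt9Aux.eb (s (σ i j)))
            - ∑ j : Fin m, z j * Stmt9Aux.eb (s' (σ i j))|
          ≤ ∑ j : Fin m, (if i.1 + j.1 = k.1 then 2 * |z j| else 0) := by
      intro i
      rw [← Finset.sum_sub_distrib]
      refine (Finset.abs_sum_le_sum_abs _ _).trans (Finset.sum_le_sum fun j _ => ?_)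
      by_cases hk : i.1 + j.1 = k.1
      · rw [if_pos hk, ← mul_sub, abs_mul]
        calc |z j| * |Stmt9Aux.eb (s (σ i j)) - Stmt9Aux.eb (s' (σ i j))|
            ≤ |z j| * 2 := mul_le_mul_of_nonneg_left (hebd _ _) (abs_nonneg _)
          _ = 2 * |z j| := mul_comm _ _
      · rw [if_neg hk]
        have heq : s (σ i j) = s' (σ i j) :=
          hss (σ i j) (fun hcon => hk (congrArg Fin.val hcon))
        simp [heq]
    have h1 : |f s - f s'|
        ≤ ∑ i ∈ K, ∑ j : Fin m, (if i.1 + j.1 = k.1 then 2 * |z j| else 0) := by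
      rw [hf]
      simp only
      rw [← Finset.sum_sub_distrib]
      refine (Finset.abs_sum_le_sum_abs _ _).trans (Finset.sum_le_sum fun i _ => ?_)
      exact (abs_abs_sub_abs_le_abs_sub _ _).trans (hrowdiff i)
    have h2 : ∑ i ∈ K, ∑ j : Fin m, (if i.1 + j.1 = k.1 then 2 * |z j| else 0)
        ≤ ∑ i : Fin n, ∑ j : Fin m, (if i.1 + j.1 = k.1 then 2 * |z j| else 0) :=
      Finset.sum_le_sum_of_subset_of_nonneg (Finset.subset_univ K)
        (fun i _ _ => Finset.sum_nonneg fun j _ => by split <;> positivity)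
    have h4 : ∀ j : Fin m,
        ∑ i : Fin n, (if i.1 + j.1 = k.1 then 2 * |z j| else 0) ≤ 2 * |z j| := by
      intro j
      rw [← Finset.sum_filter, Finset.sum_const, nsmul_eq_mul]
      have hcard : ((Finset.univ.filter fun i : Fin n => i.1 + j.1 = k.1).card : ℝ) ≤ 1 := by
        have : (Finset.univ.filter fun i : Fin n => i.1 + j.1 = k.1).card ≤ 1 := by
          refine Finset.card_le_one.2 fun a ha b hb => ?_
          rw [Finset.mem_filter] at ha hb
          exact Fin.val_injective (by omega)
        exact_mod_cast this
      calc ((Finset.univ.filter fun i : Fin n => i.1 + j.1 = k.1).card : ℝ) * (2 * |z j|)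
          ≤ 1 * (2 * |z j|) := mul_le_mul_of_nonneg_right hcard (by positivity)
        _ = 2 * |z j| := one_mul _
    calc |f s - f s'| ≤ ∑ i ∈ K, ∑ j : Fin m, (if i.1 + j.1 = k.1 then 2 * |z j| else 0) := h1
      _ ≤ ∑ i : Fin n, ∑ j : Fin m, (if i.1 + j.1 = k.1 then 2 * |z j| else 0) := h2
      _ = ∑ j : Fin m, ∑ i : Fin n, (if i.1 + j.1 = k.1 then 2 * |z j| else 0) :=
          Finset.sum_comm
      _ ≤ ∑ j : Fin m, 2 * |z j| := Finset.sum_le_sum fun j _ => h4 j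
      _ = 2 * ∑ j : Fin m, |z j| := by rw [Finset.mul_sum]
      _ ≤ 2 * Real.sqrt m := by linarith [habs]
  -- Chernoff parameters
  set c : Fin d → ℝ := fun _ => 2 * Real.sqrt m with hc
  have hVval : (∑ k : Fin d, c k ^ 2) = 4 * d * m := by
    rw [hc]
    rw [Finset.sum_const, Finset.card_univ, Fintype.card_fin, nsmul_eq_mul]
    have hs : (2 * Real.sqrt m) ^ 2 = 4 * m := by
      rw [mul_pow, Real.sq_sqrt (Nat.cast_nonneg m)]; norm_num
    rw [hs]; ring
  have hdpos : (0:ℝ) < d := by exact_mod_cast hd1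
  have hmpos : (0:ℝ) < m := by exact_mod_cast hm
  have hV : 0 < ∑ k : Fin d, c k ^ 2 := by rw [hVval]; positivity
  have hup := Stmt9Aux.chernoff f c hbd t ht hV
  have hbdneg : ∀ (k : Fin d) (s s' : Fin d → Bool), (∀ j, j ≠ k → s j = s' j)
      → |(-f) s - (-f) s'| ≤ c k := by
    intro k s s' hss
    have := hbd k s' s (fun j hj => (hss j hj).symm)
    rw [hc]
    simp only [Pi.neg_apply]
    rw [show -f s - -f s' = f s' - f s by ring]
    exact this
  have hlo := Stmt9Aux.chernoff (fun s => -f s) c hbdneg t ht hV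
  -- identify the event with the good set
  have hFemb : ∀ s : Fin d → Bool,
      (∑ i ∈ K, |(toeplitz n m (Stmt9Aux.emb s)).mulVec z i|) = f s := by
    intro s
    refine Finset.sum_congr rfl fun i _ => ?_
    congr 1
    simp only [Matrix.mulVec, dotProduct, toeplitz, Stmt9Aux.emb]
    exact Finset.sum_congr rfl fun j _ => mul_comm _ _
  have hnR : (0:ℝ) < n := by exact_mod_cast hn
  have hcenter : (K.card : ℝ) / n * ((n : ℝ) * (∫ a, |∑ i, z i * a i| ∂ radPi m)) = M := by
    rw [hIm, hmean]
    field_simp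
  set Ev : Set (Fin d → ℝ) :=
    {h | (K.card : ℝ) / n * ((n : ℝ) * (∫ a, |∑ i, z i * a i| ∂ radPi m)) - ε * n
            ≤ ∑ i ∈ K, |(toeplitz n m h).mulVec z i| ∧
          ∑ i ∈ K, |(toeplitz n m h).mulVec z i|
            ≤ (K.card : ℝ) / n * ((n : ℝ) * (∫ a, |∑ i, z i * a i| ∂ radPi m)) + ε * n}
    with hEv
  have hmem : ∀ s : Fin d → Bool,
      (Stmt9Aux.emb s ∈ Ev) ↔ (M - t ≤ f s ∧ f s ≤ M + t) := by
    intro s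
    rw [hEv]
    simp only [Set.mem_setOf_eq, hFemb s, hcenter, htdef]
  -- counting
  set Good := Finset.univ.filter fun s : Fin d → Bool => M - t ≤ f s ∧ f s ≤ M + t with hGood
  have hcount : (Good.card : ENNReal) * ((2:ENNReal) ^ d)⁻¹ ≤ radPi d Ev := by
    have h := Stmt9Aux.radPi_ge_count (d := d) Ev
    have hfe : (Finset.univ.filter fun s : Fin d → Bool => Stmt9Aux.emb s ∈ Ev) = Good := by
      refine Finset.filter_congr fun s _ => ?_
      rw [hmem s]
    rwa [hfe] at h
  set Bad := Finset.univ.filter fun s : Fin d → Bool => ¬(M - t ≤ f s ∧ f s ≤ M + t) with hBad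
  have hsplit : Good.card + Bad.card = 2 ^ d := by
    rw [hGood, hBad, Finset.card_filter_add_card_filter_not, Finset.card_univ,
      Fintype.card_fun, Fintype.card_bool, Fintype.card_fin]
  have hbadsub : Bad ⊆ (Finset.univ.filter fun s : Fin d → Bool =>
        (∑ s' : Fin d → Bool, f s') / 2 ^ d + t ≤ f s)
      ∪ (Finset.univ.filter fun s : Fin d → Bool =>
        (∑ s' : Fin d → Bool, (fun s'' => -f s'') s') / 2 ^ d + t ≤ (fun s'' => -f s'') s) := by
    intro s hs
    rw [hBad, Finset.mem_filter] at hs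
    rw [Finset.mem_union, Finset.mem_filter, Finset.mem_filter]
    have hnegsum : (∑ s' : Fin d → Bool, (fun s'' => -f s'') s') / 2 ^ d = -M := by
      rw [hM]
      simp only
      rw [Finset.sum_neg_distrib, neg_div]
    rcases not_and_or.1 hs.2 with h | h
    · right
      refine ⟨Finset.mem_univ _, ?_⟩
      rw [hnegsum]
      simp only
      push_neg at h
      linarith
    · left
      refine ⟨Finset.mem_univ _, ?_⟩
      push_neg at h
      rw [← hM]
      linarith
  have hbadcard : (Bad.card : ℝ) ≤ 2 ^ d * (2 * Real.exp (-2 * t ^ 2 / ∑ k : Fin d, c k ^ 2)) := by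
    have h1 : Bad.card ≤ (Finset.univ.filter fun s : Fin d → Bool =>
          (∑ s' : Fin d → Bool, f s') / 2 ^ d + t ≤ f s).card
        + (Finset.univ.filter fun s : Fin d → Bool =>
          (∑ s' : Fin d → Bool, (fun s'' => -f s'') s') / 2 ^ d + t ≤ (fun s'' => -f s'') s).card :=
      (Finset.card_le_card hbadsub).trans (Finset.card_union_le _ _)
    calc (Bad.card : ℝ)
        ≤ ((Finset.univ.filter fun s : Fin d → Bool =>
            (∑ s' : Fin d → Bool, f s') / 2 ^ d + t ≤ f s).card : ℝ)
          + ((Finset.univ.filter fun s : Fin d → Bool =>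
            (∑ s' : Fin d → Bool, (fun s'' => -f s'') s') / 2 ^ d + t
              ≤ (fun s'' => -f s'') s).card : ℝ) := by exact_mod_cast h1
      _ ≤ 2 ^ d * Real.exp (-2 * t ^ 2 / ∑ k : Fin d, c k ^ 2)
          + 2 ^ d * Real.exp (-2 * t ^ 2 / ∑ k : Fin d, c k ^ 2) := add_le_add hup hlo
      _ = 2 ^ d * (2 * Real.exp (-2 * t ^ 2 / ∑ k : Fin d, c k ^ 2)) := by ring
  have hgoodcard : (2:ℝ) ^ d * (1 - 2 * Real.exp (-2 * t ^ 2 / ∑ k : Fin d, c k ^ 2))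
      ≤ Good.card := by
    have hgc : (Good.card : ℝ) = 2 ^ d - Bad.card := by
      have := hsplit
      have hcast : (Good.card : ℝ) + Bad.card = 2 ^ d := by exact_mod_cast this
      linarith
    rw [hgc]
    nlinarith [hbadcard]
  -- exponent identification
  have hdcast : (d : ℝ) = (n : ℝ) + m - 1 := by
    rw [hd]
    have : ((n + m - 1 : ℕ) : ℝ) = ((n + m : ℕ) : ℝ) - 1 := by
      rw [Nat.cast_sub (by omega : 1 ≤ n + m)]; norm_num
    rw [this]; push_cast; ring
  have hexpeq : (-(ε ^ 2 * (n : ℝ) ^ 2) / (2 * ((n : ℝ) + m - 1) * m))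
      = -2 * t ^ 2 / ∑ k : Fin d, c k ^ 2 := by
    rw [hVval, ← hdcast, htdef]
    have hd0 : (d : ℝ) ≠ 0 := ne_of_gt hdpos
    have hm0 : (m : ℝ) ≠ 0 := ne_of_gt hmpos
    field_simp
    ring
  -- final chain in ENNReal
  rw [hexpeq]
  calc ENNReal.ofReal (1 - 2 * Real.exp (-2 * t ^ 2 / ∑ k : Fin d, c k ^ 2))
      ≤ ENNReal.ofReal ((Good.card : ℝ) / 2 ^ d) := by
        refine ENNReal.ofReal_le_ofReal ?_
        rw [le_div_iff₀ (by positivity : (0:ℝ) < 2 ^ d)]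
        calc (1 - 2 * Real.exp (-2 * t ^ 2 / ∑ k : Fin d, c k ^ 2)) * 2 ^ d
            = 2 ^ d * (1 - 2 * Real.exp (-2 * t ^ 2 / ∑ k : Fin d, c k ^ 2)) := mul_comm _ _
          _ ≤ Good.card := hgoodcard
    _ = (Good.card : ENNReal) * ((2:ENNReal) ^ d)⁻¹ := by
        rw [ENNReal.ofReal_div_of_pos (by positivity : (0:ℝ) < 2 ^ d), div_eq_mul_inv]
        congr 1
        · exact ENNReal.ofReal_natCast _
        · congr 1
          rw [ENNReal.ofReal_pow (by norm_num : (0:ℝ) ≤ 2)]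
          norm_num
    _ ≤ radPi d Ev := hcount
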